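/- arXiv:1701.06631 — 2 statements merged into one kernel-verified Lean document; each statement's English description precedes it below -/
import Mathlib

section
/- (Theorem 1, map-phase part.) Let K, q, t, m, r, T be positive integers with q ≤ K, t ≤ K, Km = qr, T dividing m, and T·C(K,t) dividing r, and set b = C(K,t). Then there exists a b×T matrix P of nonnegative integers (namely the balanced assignment with every entry equal to r/(bT)) such that: (i) every row of P sums to r/b (the batch size); (ii) every column of P sums to r/T (the number of coded rows per partition); and (iii) for every q-element subset G of the K servers, the total number of coded rows of each partition contained in batches stored by some server of G is at least m/T. Consequently, under this assignment any q servers collectively store enough rows of every partition to decode it, so the set of servers needed to terminate the map phase is the same as for the unpartitioned MDS scheme. -/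
lemma choose_ratio_lemma (n t : ℕ) (ht : 1 ≤ t) :
    ∀ q ≤ n, n * Nat.choose (n - q) t ≤ (n - q) * Nat.choose n t := by
  intro q
  induction q with
  | zero => simp
  | succ q ih =>
    intro hq1
    have hqn : q ≤ n := le_of_lt (Nat.lt_of_succ_le hq1)
    have ih' := ih hqn
    set s := n - q with hs
    have hs1 : 1 ≤ s := Nat.le_sub_of_add_le (by omega)
    have hss : n - (q+1) = s - 1 := by omega
    rw [hss]
    -- identity: s * C(s-1, t) = (s - t) * C(s, t)
    have hid : s * Nat.choose (s-1) t = (s - t) * Nat.choose s t := by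
      rcases Nat.exists_eq_add_of_le hs1 with ⟨k, hk⟩
      rw [hk]
      simp only [Nat.add_sub_cancel_left]
      have h1 := Nat.add_one_mul_choose_eq k t
      have h2 := Nat.choose_succ_right_eq (k + 1) t
      have h3 : (k + 1) * Nat.choose k t = Nat.choose (k+1) t * (k + 1 - t) := by
        rw [← h2, ← h1]
      rw [add_comm 1 k, h3, Nat.mul_comm]
    have hkey : s * Nat.choose (s-1) t ≤ (s - 1) * Nat.choose s t := by
      rw [hid]
      exact Nat.mul_le_mul_right _ (by omega)
    -- multiply chain: n * s * C(s-1,t) ≤ n * (s-1) * C(s,t) ≤ (s-1) * s * C(n,t)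
    have h3 : n * (s * Nat.choose (s-1) t) ≤ n * ((s-1) * Nat.choose s t) :=
      Nat.mul_le_mul_left _ hkey
    have h4 : (s-1) * (n * Nat.choose s t) ≤ (s-1) * (s * Nat.choose n t) :=
      Nat.mul_le_mul_left _ ih'
    have h5 : s * (n * Nat.choose (s-1) t) ≤ s * ((s-1) * Nat.choose n t) := by
      calc s * (n * Nat.choose (s-1) t) = n * (s * Nat.choose (s-1) t) := by ring
      _ ≤ n * ((s-1) * Nat.choose s t) := h3
      _ = (s-1) * (n * Nat.choose s t) := by ring
      _ ≤ (s-1) * (s * Nat.choose n t) := h4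
      _ = s * ((s-1) * Nat.choose n t) := by ring
    exact Nat.le_of_mul_le_mul_left h5 (by omega)

/-- Theorem 1 (map-phase part). Let `K, q, t, m, r, T` be positive integers with `q ≤ K`,
`t ≤ K`, `K * m = q * r`, `T ∣ m` and `T * C(K, t) ∣ r`, and set `b = C(K, t)`.
Batches are labeled by the `t`-element subsets of the `K` servers, and a batch is stored by a
server set `G` iff its label intersects `G`. Then there exists an assignment matrix `P`
(indexed by batch labels and partitions `Fin T`) of coded rows to batches such that:
(i) every row of `P` sums to the batch size `r / b`;
(ii) every column of `P` sums to the number `r / T` of coded rows per partition;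
(iii) for every `q`-element subset `G` of the servers and every partition, the batches whose
label intersects `G` collectively contain at least `m / T` coded rows of that partition,
i.e. any `q` servers store enough rows of every partition to decode it. -/
theorem block_diagonal_map_phase_assignment_exists
    (K q t m r T : ℕ) (hK : 0 < K) (hq0 : 0 < q) (ht0 : 0 < t) (hm : 0 < m)
    (hr : 0 < r) (hT : 0 < T) (hq : q ≤ K) (ht : t ≤ K)
    (hqr : K * m = q * r) (hTm : T ∣ m) (hdvd : T * Nat.choose K t ∣ r) :
    ∃ P : Finset (Fin K) → Fin T → ℕ,
      (∀ A ∈ Finset.powersetCard t (Finset.univ : Finset (Fin K)),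
        ∑ j : Fin T, P A j = r / Nat.choose K t) ∧
      (∀ j : Fin T,
        ∑ A ∈ Finset.powersetCard t (Finset.univ : Finset (Fin K)), P A j = r / T) ∧
      (∀ G : Finset (Fin K), G.card = q → ∀ j : Fin T,
        m / T ≤
          ∑ A ∈ (Finset.powersetCard t (Finset.univ : Finset (Fin K))).filter
              (fun A => (A ∩ G).Nonempty), P A j) := by
  set b := Nat.choose K t with hb
  have hb0 : 0 < b := Nat.choose_pos ht
  obtain ⟨d, hd⟩ := hdvd
  refine ⟨fun _ _ => d, ?_, ?_, ?_⟩
  · intro A _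
    rw [Finset.sum_const, Finset.card_univ, Fintype.card_fin, smul_eq_mul, hd]
    rw [show T * b * d = b * (T * d) by ring, Nat.mul_div_cancel_left _ hb0]
  · intro j
    rw [Finset.sum_const, smul_eq_mul, Finset.card_powersetCard, Finset.card_univ,
      Fintype.card_fin, hd, show T * b * d = T * (b * d) by ring,
      Nat.mul_div_cancel_left _ hT]
  · intro G hG j
    rw [Finset.sum_const, smul_eq_mul]
    -- card of filter = b - choose (K - q) t
    have hcompl : ((Finset.powersetCard t (Finset.univ : Finset (Fin K))).filter
        (fun A => ¬ (A ∩ G).Nonempty)) = Finset.powersetCard t Gᶜ := by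
      ext A
      simp only [Finset.mem_filter, Finset.mem_powersetCard, Finset.subset_univ,
        true_and, Finset.not_nonempty_iff_eq_empty, Finset.eq_empty_iff_forall_notMem,
        Finset.mem_inter, Finset.subset_iff, Finset.mem_compl, not_and, Finset.mem_univ]
      tauto
    have hcard : ((Finset.powersetCard t (Finset.univ : Finset (Fin K))).filter
        (fun A => (A ∩ G).Nonempty)).card = b - Nat.choose (K - q) t := by
      have := Finset.card_filter_add_card_filter_not
        (s := Finset.powersetCard t (Finset.univ : Finset (Fin K)))
        (p := fun A => (A ∩ G).Nonempty)
      rw [hcompl, Finset.card_powersetCard, Finset.card_powersetCard] at this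
      have hGc : (Gᶜ : Finset (Fin K)).card = K - q := by
        rw [Finset.card_compl, hG, Fintype.card_fin]
      rw [hGc, Finset.card_univ, Fintype.card_fin] at this
      omega
    rw [hcard]
    set N := b - Nat.choose (K - q) t with hN
    -- key inequality: q * b ≤ K * N
    have hkey : K * Nat.choose (K - q) t ≤ (K - q) * b := choose_ratio_lemma K t ht0 q hq
    have hqb : q * b ≤ K * N := by
      have : (K - q) * b + q * b = K * b := by
        rw [← Nat.add_mul]; congr 1; omega
      have hle : Nat.choose (K - q) t ≤ b := by
        calc Nat.choose (K - q) t ≤ (K-q) * b / K := by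
              exact Nat.le_div_iff_mul_le hK |>.mpr (by linarith [hkey, Nat.mul_comm (Nat.choose (K-q) t) K])
          _ ≤ K * b / K := Nat.div_le_div_right (Nat.mul_le_mul_right _ (Nat.sub_le _ _))
          _ = b := by rw [Nat.mul_div_cancel_left _ hK]
      have : K * N = K * b - K * Nat.choose (K - q) t := by
        rw [hN, Nat.mul_sub]
      omega
    -- m / T relation: K * (m/T) = q * b * d
    obtain ⟨m', hm'⟩ := hTm
    have hmT : m / T = m' := by rw [hm', Nat.mul_div_cancel_left _ hT]
    rw [hmT]
    have hKm : K * (T * m') = q * (T * b * d) := by rw [← hm', ← hd]; exact hqr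
    have hKm' : K * m' = q * (b * d) := by
      have : T * (K * m') = T * (q * (b * d)) := by ring_nf; ring_nf at hKm; linarith
      exact Nat.eq_of_mul_eq_mul_left hT this
    -- conclude: m' ≤ N * d  via  K * m' = q*b*d ≤ K*N*d
    have : K * m' ≤ K * (N * d) := by
      calc K * m' = q * b * d := by rw [hKm']; ring
        _ ≤ K * N * d := Nat.mul_le_mul_right _ hqb
        _ = K * (N * d) := by ring
    exact Nat.le_of_mul_le_mul_left this hK
end

section
/- (Correctness of the heuristic assignment solver.) Let r, T, b be positive integers with T dividing r and b dividing r. Set γ = ⌊r/(bT)⌋ and d = r/b − γT. Define the b×T matrix P = [p_{i,j}] by p_{i,j} = γ + |{a ∈ {0, 1, …, d·b − 1} : ⌊a/d⌋ = i−1 and (a mod T) = j−1}| (when d > 0; P has all entries γ when d = 0). Then every row of P sums to r/b and every column of P sums to r/T, i.e., P is a valid assignment matrix. -/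
lemma sum_card_filter {n : ℕ} (s : Finset ℕ) (p : ℕ → Prop) [DecidablePred p] (f : ℕ → ℕ)
    (hf : ∀ a ∈ s, p a → f a < n) :
    ∑ k : Fin n, (s.filter (fun a => p a ∧ f a = (k : ℕ))).card = (s.filter p).card := by
  simp_rw [Finset.card_filter]
  rw [Finset.sum_comm]
  refine Finset.sum_congr rfl fun a ha => ?_
  by_cases hp : p a
  · rw [Finset.sum_eq_single (⟨f a, hf a ha hp⟩ : Fin n)]
    · simp [hp]
    · intro k _ hk
      simp only [ite_eq_right_iff]
      rintro ⟨-, h⟩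
      exact absurd (Fin.ext h.symm) hk
    · simp
  · simp [hp]

lemma count_div (d b i : ℕ) (hi : i < b) :
    ((Finset.range (d * b)).filter (fun a => a / d = i)).card = d := by
  rcases Nat.eq_zero_or_pos d with rfl | hd
  · simp
  · have : (Finset.range (d * b)).filter (fun a => a / d = i) = Finset.Ico (i * d) ((i+1) * d) := by
      ext a
      simp only [Finset.mem_filter, Finset.mem_range, Finset.mem_Ico]
      constructor
      · rintro ⟨-, rfl⟩
        refine ⟨Nat.div_mul_le_self a d, ?_⟩
        have h := Nat.div_add_mod a d
        have h2 := Nat.mod_lt a hd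
        calc a = d * (a / d) + a % d := h.symm
          _ < d * (a / d) + d := by omega
          _ = (a / d + 1) * d := by ring
      · rintro ⟨h1, h2⟩
        have hdiv : a / d = i := Nat.div_eq_of_lt_le h1 h2
        refine ⟨?_, hdiv⟩
        calc a < (i+1) * d := h2
          _ ≤ b * d := Nat.mul_le_mul_right d hi
          _ = d * b := mul_comm b d
    rw [this, Nat.card_Ico, add_mul, one_mul]
    omega

lemma count_mod {T : ℕ} (hT : 0 < T) {j : ℕ} (hj : j < T) (c : ℕ) :
    ((Finset.range (c * T)).filter (fun a => a % T = j)).card = c := by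
  induction c with
  | zero => simp
  | succ c ih =>
    have hle : c * T ≤ (c + 1) * T := Nat.mul_le_mul_right T (Nat.le_succ c)
    have hsplit : Finset.range ((c+1) * T)
        = Finset.range (c * T) ∪ Finset.Ico (c*T) ((c+1)*T) := by
      rw [Finset.range_eq_Ico, Finset.range_eq_Ico]
      exact (Finset.Ico_union_Ico_eq_Ico (Nat.zero_le _) hle).symm
    have hdis : Disjoint ((Finset.range (c * T)).filter (fun a => a % T = j))
        ((Finset.Ico (c*T) ((c+1)*T)).filter (fun a => a % T = j)) := by
      apply Finset.disjoint_filter_filter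
      rw [Finset.range_eq_Ico]
      exact Finset.Ico_disjoint_Ico_consecutive 0 (c*T) ((c+1)*T)
    have hone : (Finset.Ico (c*T) ((c+1)*T)).filter (fun a => a % T = j) = {c*T + j} := by
      ext a
      simp only [Finset.mem_filter, Finset.mem_Ico, Finset.mem_singleton]
      have hTT : (c+1)*T = c*T + T := by ring
      constructor
      · rintro ⟨⟨h1, h2⟩, h3⟩
        have ha : a = c*T + (a - c*T) := by omega
        have h4 : a - c*T < T := by omega
        rw [ha, add_comm, Nat.add_mul_mod_self_right, Nat.mod_eq_of_lt h4] at h3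
        omega
      · rintro rfl
        refine ⟨⟨Nat.le_add_right _ _, by omega⟩, ?_⟩
        rw [add_comm, Nat.add_mul_mod_self_right, Nat.mod_eq_of_lt hj]
    rw [hsplit, Finset.filter_union, Finset.card_union_of_disjoint hdis, ih, hone,
      Finset.card_singleton]

/-- Correctness of the heuristic assignment solver. Let `r, T, b` be positive integers with
`T ∣ r` and `b ∣ r`. Set `γ = ⌊r / (b * T)⌋` and `d = r / b - γ * T`. The heuristic solver
first sets every entry of the `b × T` matrix `P` to `γ` and then, for each
`a ∈ {0, …, d * b - 1}`, increments the entry in row `⌊a / d⌋` and column `a % T`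
(rows and columns indexed from `0` here). The resulting matrix `P` is a valid assignment
matrix: every row sums to the batch size `r / b` and every column sums to the number of
coded rows per partition `r / T`. (When `d = 0` no increments occur and `P` is constant `γ`.) -/
theorem heuristic_solver_valid_assignment (r T b : ℕ)
    (hr : 0 < r) (hT : 0 < T) (hb : 0 < b) (hTr : T ∣ r) (hbr : b ∣ r) :
    ∀ γ d : ℕ, γ = r / (b * T) → d = r / b - γ * T →
    ∀ P : Fin b → Fin T → ℕ,
      (∀ i j, P i j =
        γ + ((Finset.range (d * b)).filter
              (fun a => a / d = (i : ℕ) ∧ a % T = (j : ℕ))).card) →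
      ((∀ i, ∑ j : Fin T, P i j = r / b) ∧ (∀ j, ∑ i : Fin b, P i j = r / T)) := by
  intro γ d hγ hd P hP
  obtain ⟨m, rfl⟩ := hbr
  have hm : 0 < m := Nat.pos_of_ne_zero (by rintro rfl; simp at hr)
  have hrb : b * m / b = m := Nat.mul_div_cancel_left m hb
  have hγ' : γ = m / T := by rw [hγ, Nat.mul_div_mul_left _ _ hb]
  have hkey : m / T * T + m % T = m := by rw [mul_comm]; exact Nat.div_add_mod m T
  have hd' : d = m % T := by rw [hd, hγ', hrb]; omega
  have hmd : γ * T + d = m := by rw [hγ', hd']; exact hkey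
  -- divisibility of d * b by T
  have hdvd : T ∣ d * b := by
    have h1 : b * m = γ * T * b + d * b := by rw [← hmd]; ring
    have h2 : T ∣ γ * T * b := ⟨γ * b, by ring⟩
    exact (Nat.dvd_add_right h2).mp (h1 ▸ hTr)
  obtain ⟨c, hc⟩ := hdvd
  have hdb : d * b / T = c := by rw [hc, Nat.mul_div_cancel_left c hT]
  constructor
  · intro i
    have hsum : ∑ j : Fin T, ((Finset.range (d * b)).filter
        (fun a => a / d = (i : ℕ) ∧ a % T = (j : ℕ))).card
        = ((Finset.range (d * b)).filter (fun a => a / d = (i : ℕ))).card := by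
      exact sum_card_filter _ _ _ (fun a _ _ => Nat.mod_lt a hT)
    calc ∑ j : Fin T, P i j
        = ∑ j : Fin T, (γ + ((Finset.range (d * b)).filter
            (fun a => a / d = (i : ℕ) ∧ a % T = (j : ℕ))).card) :=
          Finset.sum_congr rfl fun j _ => hP i j
      _ = T * γ + ((Finset.range (d * b)).filter (fun a => a / d = (i : ℕ))).card := by
          rw [Finset.sum_add_distrib, hsum, Finset.sum_const, Finset.card_univ,
            Fintype.card_fin, smul_eq_mul]
      _ = T * γ + d := by rw [count_div d b i i.isLt]
      _ = b * m / b := by rw [hrb, ← hmd, mul_comm]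
  · intro j
    have hsum : ∑ i : Fin b, ((Finset.range (d * b)).filter
        (fun a => a / d = (i : ℕ) ∧ a % T = (j : ℕ))).card
        = ((Finset.range (d * b)).filter (fun a => a % T = (j : ℕ))).card := by
      have := sum_card_filter (n := b) (Finset.range (d * b))
        (fun a => a % T = (j : ℕ)) (fun a => a / d) ?_
      · rw [← this]
        refine Finset.sum_congr rfl fun i _ => ?_
        congr 1
        apply Finset.filter_congr
        intro a _
        simp [and_comm]
      · intro a ha _
        rw [Finset.mem_range] at ha
        rcases Nat.eq_zero_or_pos d with rfl | hd0
        · simp at ha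
        · exact (Nat.div_lt_iff_lt_mul hd0).mpr (mul_comm d b ▸ ha)
    have hc' : d * b = c * T := hc.symm ▸ (mul_comm T c)
    have hcount : ((Finset.range (d * b)).filter (fun a => a % T = (j : ℕ))).card = c := by
      rw [hc']; exact count_mod hT j.isLt c
    have hrT : b * m / T = b * γ + c := by
      have : b * m = (b * γ + c) * T := by
        calc b * m = b * (γ * T + d) := by rw [hmd]
          _ = b * γ * T + d * b := by ring
          _ = b * γ * T + T * c := by rw [hc]
          _ = (b * γ + c) * T := by ring
      rw [this, Nat.mul_div_cancel _ hT]
    calc ∑ i : Fin b, P i j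
        = ∑ i : Fin b, (γ + ((Finset.range (d * b)).filter
            (fun a => a / d = (i : ℕ) ∧ a % T = (j : ℕ))).card) :=
          Finset.sum_congr rfl fun i _ => hP i j
      _ = b * γ + c := by
          rw [Finset.sum_add_distrib, hsum, hcount, Finset.sum_const, Finset.card_univ,
            Fintype.card_fin, smul_eq_mul]
      _ = b * m / T := hrT.symm
end
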